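/- Let P and Q be positive joint distributions on 𝒳 × 𝒴 and let 0 < r < E(Q‖P). Then the minimizer Q* of min{ D(Q̄‖Q) : Q̄ a joint distribution with E(Q̄‖P) ≤ r } is unique, and the minimizer P* of min{ E(P̄‖Q) : P̄ a joint distribution with D(P̄‖P) ≤ r } is unique; moreover Q* and P* are positive, Q* ∈ ℰ^{xy}(Q), P* ∈ ℰ^{xy}(P), and they have the same marginals: Q*_X = P*_X and Q*_Y = P*_Y. -/

import Mathlib

open scoped Classical BigOperators

noncomputable section

variable {X Y : Type*} [Fintype X] [Fintype Y]

/-- `P` is a joint distribution on `X × Y`. -/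
def IsDist (P : X × Y → ℝ) : Prop :=
  (∀ z, 0 ≤ P z) ∧ ∑ z : X × Y, P z = 1

/-- `P` is a positive joint distribution on `X × Y`. -/
def IsPos (P : X × Y → ℝ) : Prop :=
  (∀ z, 0 < P z) ∧ ∑ z : X × Y, P z = 1

/-- The first marginal of a joint distribution. -/
def margX (P : X × Y → ℝ) (x : X) : ℝ := ∑ y : Y, P (x, y)

/-- The second marginal of a joint distribution. -/
def margY (P : X × Y → ℝ) (y : Y) : ℝ := ∑ x : X, P (x, y)

/-- Relative entropy `D(P‖Q)` (natural log; `Real.log 0 = 0` realizes `0·log 0 = 0`). -/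
def relEnt (P Q : X × Y → ℝ) : ℝ := ∑ z : X × Y, P z * Real.log (P z / Q z)

/-- Projected relative entropy `E(P‖Q)`. -/
def projE (P Q : X × Y → ℝ) : ℝ :=
  sInf { d : ℝ | ∃ P' : X × Y → ℝ,
    IsDist P' ∧ margX P' = margX P ∧ margY P' = margY P ∧ d = relEnt P' Q }

/-- `R ∈ ℰ^{xy}(S)` : `R` has the same correlation coordinates as `S`. -/
def SameCorr (R S : X × Y → ℝ) : Prop :=
  ∃ a1 : X → ℝ, ∃ a2 : Y → ℝ,
    ∀ x : X, ∀ y : Y, Real.log (R (x, y) / S (x, y)) = a1 x + a2 y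

/-- The type (empirical distribution) of a sequence. -/
def empDist {n : ℕ} (x : Fin n → X) (a : X) : ℝ :=
  ((Finset.univ.filter fun i => x i = a).card : ℝ) / n

/-- The joint type of a pair of sequences. -/
def empJoint {n : ℕ} (x : Fin n → X) (y : Fin n → Y) (z : X × Y) : ℝ :=
  ((Finset.univ.filter fun i => x i = z.1 ∧ y i = z.2).card : ℝ) / n

/-- Probability of a set under the `n`-fold i.i.d. product of `P`. -/
def prodProb (P : X × Y → ℝ) (n : ℕ) (A : Set ((Fin n → X) × (Fin n → Y))) : ℝ :=
  ∑ z : (Fin n → X) × (Fin n → Y),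
    if z ∈ A then ∏ i : Fin n, P (z.1 i, z.2 i) else 0

/-- `P` is a joint type with denominator `n` (an element of `𝒫ₙ(𝒳 × 𝒴)`). -/
def IsTypeN (n : ℕ) (P : X × Y → ℝ) : Prop :=
  IsDist P ∧ ∀ z : X × Y, ∃ k : ℕ, P z = (k : ℝ) / n

/-- `Eₙ(P̄‖Q)` : projected relative entropy restricted to joint types. -/
def En (n : ℕ) (Pbar Q : X × Y → ℝ) : ℝ :=
  sInf { d : ℝ | ∃ Pt : X × Y → ℝ,
    IsTypeN n Pt ∧ margX Pt = margX Pbar ∧ margY Pt = margY Pbar ∧ d = relEnt Pt Q }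

/-- Standard normal cumulative distribution function `Φ`. -/
def stdNormalCDF (t : ℝ) : ℝ :=
  ∫ u in Set.Iic t, (Real.sqrt (2 * Real.pi))⁻¹ * Real.exp (-(u ^ 2) / 2)

/-- Inverse of the standard normal CDF, `Φ⁻¹`. -/
def stdNormalCDFInv (e : ℝ) : ℝ := Function.invFun stdNormalCDF e

section AuxLemmas
set_option linter.unusedSectionVars false

variable {P Q A B R u v w : X × Y → ℝ} {s : ℝ}

lemma IsPos.isDist (h : IsPos P) : IsDist P := ⟨fun z => (h.1 z).le, h.2⟩

lemma mul_log_div_eq {q : ℝ} (hq : 0 < q) (p : ℝ) :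
    p * Real.log (p / q) = p * Real.log p - p * Real.log q := by
  rcases eq_or_ne p 0 with h | h
  · simp [h]
  · rw [Real.log_div h hq.ne', mul_sub]

lemma continuous_relEnt_left (hQ : ∀ z, 0 < Q z) :
    Continuous fun f : X × Y → ℝ => relEnt f Q := by
  unfold relEnt
  refine continuous_finset_sum _ fun z _ => ?_
  have hfe : (fun f : X × Y → ℝ => f z * Real.log (f z / Q z))
      = fun f : X × Y → ℝ => f z * Real.log (f z) - f z * Real.log (Q z) := by
    funext f; exact mul_log_div_eq (hQ z) _
  rw [hfe]
  exact (Real.continuous_mul_log.comp (continuous_apply z)).sub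
    ((continuous_apply z).mul continuous_const)

lemma mul_log_div_ge {p q : ℝ} (hq : 0 < q) (hp : 0 ≤ p) :
    p - q ≤ p * Real.log (p / q) := by
  rcases hp.eq_or_lt with h | h
  · simp [← h, hq.le]
  · have hlog : Real.log (q / p) ≤ q / p - 1 :=
      Real.log_le_sub_one_of_pos (div_pos hq h)
    have hinv : Real.log (p / q) = -Real.log (q / p) := by
      rw [show p / q = (q / p)⁻¹ by rw [inv_div], Real.log_inv]
    rw [hinv]
    have h2 : p * (q / p - 1) = q - p := by field_simp
    nlinarith [mul_le_mul_of_nonneg_left hlog h.le]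

lemma relEnt_nonneg (hP : IsDist P) (hQ : IsPos Q) : 0 ≤ relEnt P Q := by
  have : ∑ z : X × Y, (P z - Q z) ≤ relEnt P Q :=
    Finset.sum_le_sum fun z _ => mul_log_div_ge (hQ.1 z) (hP.1 z)
  rwa [Finset.sum_sub_distrib, hP.2, hQ.2, sub_self] at this

lemma relEnt_self (hQ : IsPos Q) : relEnt Q Q = 0 := by
  unfold relEnt
  refine Finset.sum_eq_zero fun z _ => ?_
  rw [div_self (hQ.1 z).ne', Real.log_one, mul_zero]

lemma eq_of_relEnt_eq_zero (hP : IsDist P) (hQ : IsPos Q) (h : relEnt P Q = 0) : P = Q := by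
  have hnn : ∀ z ∈ Finset.univ, (0:ℝ) ≤ P z * Real.log (P z / Q z) - (P z - Q z) :=
    fun z _ => sub_nonneg.2 (mul_log_div_ge (hQ.1 z) (hP.1 z))
  have hsum : ∑ z : X × Y, (P z * Real.log (P z / Q z) - (P z - Q z)) = 0 := by
    rw [Finset.sum_sub_distrib, Finset.sum_sub_distrib, hP.2, hQ.2]
    simpa [relEnt] using h
  have key : ∀ z : X × Y, P z * Real.log (P z / Q z) - (P z - Q z) = 0 := fun z =>
    (Finset.sum_eq_zero_iff_of_nonneg hnn).1 hsum z (Finset.mem_univ z)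
  funext z
  by_contra hne
  rcases (hP.1 z).eq_or_lt with h0 | hpos
  · have := key z
    rw [← h0] at this
    simp at this
    exact (hQ.1 z).ne' this
  · have hne' : Q z / P z ≠ 1 := by
      intro e
      have hp0 : P z ≠ 0 := hpos.ne'
      apply hne
      field_simp at e
      linarith
    have hlt : Real.log (Q z / P z) < Q z / P z - 1 :=
      Real.log_lt_sub_one_of_pos (div_pos (hQ.1 z) hpos) hne'
    have hinv : Real.log (P z / Q z) = -Real.log (Q z / P z) := by
      rw [show P z / Q z = (Q z / P z)⁻¹ by rw [inv_div], Real.log_inv]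
    have h2 : P z * (Q z / P z - 1) = Q z - P z := by field_simp
    have := key z
    nlinarith [mul_lt_mul_of_pos_left hlt hpos]

lemma mul_log_div_combo_le {a b q : ℝ} (ha : 0 ≤ a) (hb : 0 ≤ b) (hq : 0 < q)
    (hs0 : 0 ≤ s) (hs1 : s ≤ 1) :
    ((1 - s) * a + s * b) * Real.log (((1 - s) * a + s * b) / q)
      ≤ (1 - s) * (a * Real.log (a / q)) + s * (b * Real.log (b / q)) := by
  have h := Real.convexOn_mul_log.2 (Set.mem_Ici.mpr ha) (Set.mem_Ici.mpr hb)
    (by linarith : (0:ℝ) ≤ 1 - s) hs0 (by ring)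
  simp only [smul_eq_mul] at h
  rw [mul_log_div_eq hq, mul_log_div_eq hq, mul_log_div_eq hq]
  nlinarith [h]

lemma mul_log_div_mid_lt {a b q : ℝ} (ha : 0 ≤ a) (hb : 0 ≤ b) (hq : 0 < q)
    (hab : a ≠ b) :
    ((1 - (1/2:ℝ)) * a + (1/2:ℝ) * b) * Real.log (((1 - (1/2:ℝ)) * a + (1/2:ℝ) * b) / q)
      < (1 - (1/2:ℝ)) * (a * Real.log (a / q)) + (1/2:ℝ) * (b * Real.log (b / q)) := by
  have h := Real.strictConvexOn_mul_log.2 (Set.mem_Ici.mpr ha) (Set.mem_Ici.mpr hb)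
    hab (by norm_num : (0:ℝ) < 1 - 1/2) (by norm_num : (0:ℝ) < 1/2) (by ring)
  simp only [smul_eq_mul] at h
  rw [mul_log_div_eq hq, mul_log_div_eq hq, mul_log_div_eq hq]
  nlinarith [h]

lemma relEnt_mix_le (hA : ∀ z, 0 ≤ A z) (hB : ∀ z, 0 ≤ B z) (hQ : ∀ z, 0 < Q z)
    (hs0 : 0 ≤ s) (hs1 : s ≤ 1) :
    relEnt (fun z => (1 - s) * A z + s * B z) Q ≤ (1 - s) * relEnt A Q + s * relEnt B Q := by
  unfold relEnt
  rw [Finset.mul_sum, Finset.mul_sum, ← Finset.sum_add_distrib]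
  exact Finset.sum_le_sum fun z _ => mul_log_div_combo_le (hA z) (hB z) (hQ z) hs0 hs1

lemma relEnt_mid_lt (hA : ∀ z, 0 ≤ A z) (hB : ∀ z, 0 ≤ B z) (hQ : ∀ z, 0 < Q z)
    (hne : A ≠ B) :
    relEnt (fun z => (1 - (1/2:ℝ)) * A z + (1/2:ℝ) * B z) Q
      < (1 - (1/2:ℝ)) * relEnt A Q + (1/2:ℝ) * relEnt B Q := by
  obtain ⟨z0, hz0⟩ : ∃ z, A z ≠ B z := by
    by_contra h; push_neg at h; exact hne (funext h)
  unfold relEnt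
  rw [Finset.mul_sum, Finset.mul_sum, ← Finset.sum_add_distrib]
  exact Finset.sum_lt_sum
    (fun z _ => mul_log_div_combo_le (hA z) (hB z) (hQ z) (by norm_num) (by norm_num))
    ⟨z0, Finset.mem_univ z0, mul_log_div_mid_lt (hA z0) (hB z0) (hQ z0) hz0⟩

lemma isDist_mix (hA : IsDist A) (hB : IsDist B) (hs0 : 0 ≤ s) (hs1 : s ≤ 1) :
    IsDist (fun z => (1 - s) * A z + s * B z) := by
  constructor
  · intro z
    have h1 := hA.1 z; have h2 := hB.1 z
    have : 0 ≤ 1 - s := by linarith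
    positivity
  · rw [Finset.sum_add_distrib, ← Finset.mul_sum, ← Finset.mul_sum, hA.2, hB.2]; ring

lemma margX_mix (A B : X × Y → ℝ) (s : ℝ) :
    margX (fun z => (1 - s) * A z + s * B z) = fun x => (1 - s) * margX A x + s * margX B x := by
  funext x
  unfold margX
  rw [Finset.sum_add_distrib, ← Finset.mul_sum, ← Finset.mul_sum]

lemma margY_mix (A B : X × Y → ℝ) (s : ℝ) :
    margY (fun z => (1 - s) * A z + s * B z) = fun y => (1 - s) * margY A y + s * margY B y := by
  funext y
  unfold margY
  rw [Finset.sum_add_distrib, ← Finset.mul_sum, ← Finset.mul_sum]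

end AuxLemmas
section AuxLemmas2
set_option linter.unusedSectionVars false

variable {P Q A B R : X × Y → ℝ}

lemma projE_bddBelow (hQ : IsPos Q) (A : X × Y → ℝ) :
    BddBelow { d : ℝ | ∃ P' : X × Y → ℝ,
      IsDist P' ∧ margX P' = margX A ∧ margY P' = margY A ∧ d = relEnt P' Q } := by
  refine ⟨0, ?_⟩
  rintro d ⟨P', h1, -, -, rfl⟩
  exact relEnt_nonneg h1 hQ

lemma projE_le_relEnt_of (hQ : IsPos Q) (hR : IsDist R)
    (hX : margX R = margX A) (hY : margY R = margY A) :
    projE A Q ≤ relEnt R Q :=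
  csInf_le (projE_bddBelow hQ A) ⟨R, hR, hX, hY, rfl⟩

lemma projE_le_relEnt (hQ : IsPos Q) (hA : IsDist A) : projE A Q ≤ relEnt A Q :=
  projE_le_relEnt_of hQ hA rfl rfl

lemma projE_nonneg (hQ : IsPos Q) (hA : IsDist A) : 0 ≤ projE A Q :=
  le_csInf ⟨relEnt A Q, A, hA, rfl, rfl, rfl⟩
    (by rintro d ⟨P', h1, -, -, rfl⟩; exact relEnt_nonneg h1 hQ)

lemma projE_eq_of_marg (Q : X × Y → ℝ) (hX : margX A = margX B) (hY : margY A = margY B) :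
    projE A Q = projE B Q := by
  unfold projE
  rw [hX, hY]

lemma projE_self (hQ : IsPos Q) : projE Q Q = 0 :=
  le_antisymm (by simpa [relEnt_self hQ] using projE_le_relEnt hQ hQ.isDist)
    (projE_nonneg hQ hQ.isDist)

lemma isClosed_isDist : IsClosed { f : X × Y → ℝ | IsDist f } := by
  have : { f : X × Y → ℝ | IsDist f }
      = (⋂ z : X × Y, { f : X × Y → ℝ | 0 ≤ f z }) ∩ { f : X × Y → ℝ | ∑ z, f z = 1 } := by
    ext f; simp [IsDist, Set.mem_iInter]
  rw [this]
  exact ((isClosed_iInter fun z => isClosed_le continuous_const (continuous_apply z)).inter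
    (isClosed_eq (continuous_finset_sum _ fun z _ => continuous_apply z) continuous_const))

lemma continuous_margX_apply (x : X) : Continuous fun f : X × Y → ℝ => margX f x :=
  continuous_finset_sum _ fun y _ => continuous_apply (x, y)

lemma continuous_margY_apply (y : Y) : Continuous fun f : X × Y → ℝ => margY f y :=
  continuous_finset_sum _ fun x _ => continuous_apply (x, y)

lemma dist_subset_box :
    { f : X × Y → ℝ | IsDist f } ⊆ Set.pi Set.univ fun _ : X × Y => Set.Icc (0:ℝ) 1 := by
  intro f hf z _
  obtain ⟨hpos, hsum⟩ := hf
  refine ⟨hpos z, ?_⟩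
  calc f z ≤ ∑ w, f w := Finset.single_le_sum (fun w _ => hpos w) (Finset.mem_univ z)
  _ = 1 := hsum

lemma exists_min_on_dists {S : Set (X × Y → ℝ)} (hcl : IsClosed S)
    (hsub : S ⊆ { f : X × Y → ℝ | IsDist f }) (hne : S.Nonempty)
    {g : (X × Y → ℝ) → ℝ} (hg : Continuous g) :
    ∃ f ∈ S, ∀ f' ∈ S, g f ≤ g f' := by
  have hK : IsCompact S :=
    (isCompact_univ_pi fun _ : X × Y => isCompact_Icc).of_isClosed_subset hcl
      (hsub.trans dist_subset_box)
  obtain ⟨f, hfS, hmin⟩ := hK.exists_isMinOn hne hg.continuousOn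
  exact ⟨f, hfS, fun f' hf' => hmin hf'⟩

lemma exists_min_on_pairs {S : Set ((X × Y → ℝ) × (X × Y → ℝ))} (hcl : IsClosed S)
    (hsub : ∀ p ∈ S, IsDist p.1 ∧ IsDist p.2) (hne : S.Nonempty)
    {g : ((X × Y → ℝ) × (X × Y → ℝ)) → ℝ} (hg : Continuous g) :
    ∃ p ∈ S, ∀ p' ∈ S, g p ≤ g p' := by
  have hbox : S ⊆ (Set.pi Set.univ fun _ : X × Y => Set.Icc (0:ℝ) 1) ×ˢ
      (Set.pi Set.univ fun _ : X × Y => Set.Icc (0:ℝ) 1) := by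
    intro p hp
    exact ⟨dist_subset_box (hsub p hp).1, dist_subset_box (hsub p hp).2⟩
  have hK : IsCompact S :=
    (IsCompact.prod (isCompact_univ_pi fun _ : X × Y => isCompact_Icc)
      (isCompact_univ_pi fun _ : X × Y => isCompact_Icc)).of_isClosed_subset hcl hbox
  obtain ⟨p, hpS, hmin⟩ := hK.exists_isMinOn hne hg.continuousOn
  exact ⟨p, hpS, fun p' hp' => hmin hp'⟩

lemma isClosed_margPair :
    IsClosed { p : (X × Y → ℝ) × (X × Y → ℝ) |
      margX p.2 = margX p.1 ∧ margY p.2 = margY p.1 } := by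
  have h1 : IsClosed { p : (X × Y → ℝ) × (X × Y → ℝ) | margX p.2 = margX p.1 } := by
    have : { p : (X × Y → ℝ) × (X × Y → ℝ) | margX p.2 = margX p.1 }
        = ⋂ x : X, { p : (X × Y → ℝ) × (X × Y → ℝ) | margX p.2 x = margX p.1 x } := by
      ext p; simp [funext_iff, Set.mem_iInter]
    rw [this]
    exact isClosed_iInter fun x => isClosed_eq
      ((continuous_margX_apply x).comp continuous_snd)
      ((continuous_margX_apply x).comp continuous_fst)
  have h2 : IsClosed { p : (X × Y → ℝ) × (X × Y → ℝ) | margY p.2 = margY p.1 } := by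
    have : { p : (X × Y → ℝ) × (X × Y → ℝ) | margY p.2 = margY p.1 }
        = ⋂ y : Y, { p : (X × Y → ℝ) × (X × Y → ℝ) | margY p.2 y = margY p.1 y } := by
      ext p; simp [funext_iff, Set.mem_iInter]
    rw [this]
    exact isClosed_iInter fun y => isClosed_eq
      ((continuous_margY_apply y).comp continuous_snd)
      ((continuous_margY_apply y).comp continuous_fst)
  exact h1.inter h2

/-- Attainment of the projected relative entropy. -/
lemma exists_projE_min (hA : IsDist A) (hQ : IsPos Q) :
    ∃ R : X × Y → ℝ, IsDist R ∧ margX R = margX A ∧ margY R = margY A ∧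
      relEnt R Q = projE A Q := by
  set S : Set (X × Y → ℝ) :=
    { f | IsDist f ∧ margX f = margX A ∧ margY f = margY A } with hS
  have hcl : IsClosed S := by
    have hrw : S = { f : X × Y → ℝ | IsDist f }
        ∩ ((⋂ x : X, { f : X × Y → ℝ | margX f x = margX A x })
          ∩ (⋂ y : Y, { f : X × Y → ℝ | margY f y = margY A y })) := by
      ext f
      simp [hS, funext_iff, Set.mem_iInter, and_assoc]
    rw [hrw]
    exact isClosed_isDist.inter
      ((isClosed_iInter fun x => isClosed_eq (continuous_margX_apply x) continuous_const).inter
        (isClosed_iInter fun y => isClosed_eq (continuous_margY_apply y) continuous_const))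
  obtain ⟨R, hRS, hmin⟩ := exists_min_on_dists hcl (fun f hf => hf.1) ⟨A, hA, rfl, rfl⟩
    (continuous_relEnt_left fun z => hQ.1 z)
  refine ⟨R, hRS.1, hRS.2.1, hRS.2.2, ?_⟩
  have hleast : IsLeast { d : ℝ | ∃ P' : X × Y → ℝ,
      IsDist P' ∧ margX P' = margX A ∧ margY P' = margY A ∧ d = relEnt P' Q }
      (relEnt R Q) := by
    constructor
    · exact ⟨R, hRS.1, hRS.2.1, hRS.2.2, rfl⟩
    · rintro d ⟨P', h1, h2, h3, rfl⟩
      exact hmin P' ⟨h1, h2, h3⟩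
  exact (hleast.csInf_eq).symm

end AuxLemmas2
section AuxLemmas3
set_option linter.unusedSectionVars false

variable {P Q A B R u v : X × Y → ℝ} {s : ℝ}

lemma projE_mix_le (hA : IsDist A) (hB : IsDist B) (hQ : IsPos Q)
    (hs0 : 0 ≤ s) (hs1 : s ≤ 1) :
    projE (fun z => (1 - s) * A z + s * B z) Q ≤ (1 - s) * projE A Q + s * projE B Q := by
  obtain ⟨RA, hRA, hRAX, hRAY, hRAval⟩ := exists_projE_min hA hQ
  obtain ⟨RB, hRB, hRBX, hRBY, hRBval⟩ := exists_projE_min hB hQ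
  have hmix : IsDist (fun z => (1 - s) * RA z + s * RB z) := isDist_mix hRA hRB hs0 hs1
  have h1 : projE (fun z => (1 - s) * A z + s * B z) Q
      ≤ relEnt (fun z => (1 - s) * RA z + s * RB z) Q := by
    refine projE_le_relEnt_of hQ hmix ?_ ?_
    · rw [margX_mix, margX_mix, hRAX, hRBX]
    · rw [margY_mix, margY_mix, hRAY, hRBY]
  calc projE (fun z => (1 - s) * A z + s * B z) Q
      ≤ relEnt (fun z => (1 - s) * RA z + s * RB z) Q := h1
  _ ≤ (1 - s) * relEnt RA Q + s * relEnt RB Q :=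
      relEnt_mix_le hRA.1 hRB.1 (fun z => hQ.1 z) hs0 hs1
  _ = (1 - s) * projE A Q + s * projE B Q := by rw [hRAval, hRBval]

/-- The "−∞ slope" perturbation lemma: mixing a distribution having a zero with a
positive function strictly decreases relative entropy for small mixing weight. -/
lemma relEnt_mix_lt_of_zero (hQ : ∀ z, 0 < Q z) (hu : ∀ z, 0 ≤ u z) (hv : ∀ z, 0 < v z)
    {z0 : X × Y} (hz0 : u z0 = 0) :
    ∃ s : ℝ, 0 < s ∧ s ≤ 1/2 ∧
      relEnt (fun z => (1 - s) * u z + s * v z) Q < relEnt u Q := by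
  classical
  set ψ : (X × Y) → ℝ → ℝ := fun z t => t * Real.log (t / Q z) with hψ
  set m : X × Y → ℝ := fun z => (1 - (1/2:ℝ)) * u z + (1/2:ℝ) * v z with hm
  have hmnn : ∀ z, 0 ≤ m z := by
    intro z; have := hu z; have := (hv z).le; simp only [hm]; nlinarith
  set K : ℝ := ∑ z ∈ Finset.univ.erase z0, (ψ z (m z) - ψ z (u z)) with hK
  set c0 : ℝ := Real.log (v z0 / Q z0) with hc0
  set s : ℝ := min (1/2) (Real.exp (-(v z0 * c0 + 2*K + 1) / v z0)) with hs
  have hspos : 0 < s := lt_min (by norm_num) (Real.exp_pos _)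
  have hs12 : s ≤ 1/2 := min_le_left _ _
  refine ⟨s, hspos, hs12, ?_⟩
  have hpt : ∀ z, ψ z ((1-s)*u z + s*v z) ≤ ψ z (u z) + 2*s*(ψ z (m z) - ψ z (u z)) := by
    intro z
    have key : (1-s)*u z + s*v z = (1 - 2*s)*(u z) + (2*s)*(m z) := by
      simp only [hm]; ring
    have hcx := mul_log_div_combo_le (s := 2*s) (hu z) (hmnn z) (hQ z)
      (by linarith) (by linarith)
    simp only [hψ]
    rw [key]
    linarith [hcx]
  -- the z0 term
  have hz0term : ψ z0 ((1-s)*u z0 + s*v z0) = s * v z0 * (Real.log s + c0) := by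
    have e1 : (1-s)*u z0 + s*v z0 = s * v z0 := by rw [hz0]; ring
    have hlogeq : Real.log (s * v z0 / Q z0) = Real.log s + c0 := by
      rw [hc0, mul_div_assoc, Real.log_mul hspos.ne' (div_pos (hv z0) (hQ z0)).ne']
    simp only [hψ]
    rw [e1, hlogeq]
  -- sum splitting
  have hsplit : ∀ w : X × Y → ℝ, relEnt w Q = ψ z0 (w z0) + ∑ z ∈ Finset.univ.erase z0, ψ z (w z) := by
    intro w
    rw [relEnt, ← Finset.add_sum_erase _ _ (Finset.mem_univ z0)]
  have hb1 : ∑ z ∈ Finset.univ.erase z0, ψ z ((1-s)*u z + s*v z)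
      ≤ ∑ z ∈ Finset.univ.erase z0, ψ z (u z) + 2*s*K := by
    rw [hK, Finset.mul_sum, ← Finset.sum_add_distrib]
    exact Finset.sum_le_sum fun z _ => hpt z
  have hlogs : v z0 * Real.log s ≤ -(v z0 * c0 + 2*K + 1) := by
    have h1 : Real.log s ≤ -(v z0 * c0 + 2*K + 1) / v z0 := by
      calc Real.log s ≤ Real.log (Real.exp (-(v z0 * c0 + 2*K + 1) / v z0)) :=
        Real.log_le_log hspos (min_le_right _ _)
      _ = -(v z0 * c0 + 2*K + 1) / v z0 := Real.log_exp _
    have h2 : v z0 * (-(v z0 * c0 + 2*K + 1) / v z0) = -(v z0 * c0 + 2*K + 1) := by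
      rw [mul_div_assoc']
      exact mul_div_cancel_left₀ _ (hv z0).ne'
    calc v z0 * Real.log s ≤ v z0 * (-(v z0 * c0 + 2*K + 1) / v z0) :=
      mul_le_mul_of_nonneg_left h1 (hv z0).le
    _ = -(v z0 * c0 + 2*K + 1) := h2
  have hneg : s * v z0 * (Real.log s + c0) + 2*s*K ≤ -s := by
    have : v z0 * (Real.log s + c0) + 2*K ≤ -1 := by
      have := hlogs; nlinarith [hlogs]
    nlinarith [hspos, this]
  have hz0u : ψ z0 (u z0) = 0 := by simp [hψ, hz0]
  calc relEnt (fun z => (1 - s) * u z + s * v z) Q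
      = ψ z0 ((1-s)*u z0 + s*v z0) + ∑ z ∈ Finset.univ.erase z0, ψ z ((1-s)*u z + s*v z) :=
        hsplit _
  _ ≤ s * v z0 * (Real.log s + c0) + (∑ z ∈ Finset.univ.erase z0, ψ z (u z) + 2*s*K) := by
        rw [hz0term]; exact add_le_add le_rfl hb1
  _ ≤ ∑ z ∈ Finset.univ.erase z0, ψ z (u z) - s := by linarith [hneg]
  _ < ψ z0 (u z0) + ∑ z ∈ Finset.univ.erase z0, ψ z (u z) := by
        rw [hz0u]; linarith [hspos]
  _ = relEnt u Q := (hsplit u).symm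

/-- First-order condition: if `relEnt (u + t h) Q` has a local minimum at `t = 0`
with `u` positive, then the directional derivative vanishes. -/
lemma sum_deriv_eq_zero_of_localmin (hQ : ∀ z, 0 < Q z) (hu : ∀ z, 0 < u z)
    {h : X × Y → ℝ}
    (hmin : ∀ᶠ t in nhds (0:ℝ), relEnt u Q ≤ relEnt (fun z => u z + t * h z) Q) :
    ∑ z : X × Y, h z * (Real.log (u z / Q z) + 1) = 0 := by
  set F : ℝ → ℝ := fun t => relEnt (fun z => u z + t * h z) Q with hF
  have hd : HasDerivAt F (∑ z : X × Y, h z * (Real.log (u z / Q z) + 1)) 0 := by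
    have : HasDerivAt (fun t => ∑ z : X × Y, (u z + t * h z) * Real.log ((u z + t * h z) / Q z))
        (∑ z : X × Y, h z * (Real.log (u z / Q z) + 1)) 0 := by
      apply HasDerivAt.fun_sum
      intro z _
      -- affine map
      have hA : HasDerivAt (fun t : ℝ => u z + t * h z) (h z) 0 := by
        simpa using (hasDerivAt_mul_const (h z)).const_add (u z)
      have hA0 : u z + (0:ℝ) * h z = u z := by ring
      -- the smooth version
      have hG : HasDerivAt
          (fun t : ℝ => (u z + t * h z) * Real.log (u z + t * h z)
            - (u z + t * h z) * Real.log (Q z))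
          (h z * (Real.log (u z / Q z) + 1)) 0 := by
        have hlog : HasDerivAt (fun t : ℝ => Real.log (u z + t * h z)) (h z / u z) 0 := by
          have := hA.log (by rw [hA0]; exact (hu z).ne')
          rwa [hA0] at this
        have hmul := hA.mul hlog
        have hc := hA.mul_const (Real.log (Q z))
        have := hmul.sub hc
        refine this.congr_deriv ?_
        rw [hA0]
        have h3 : u z * (h z / u z) = h z := by
          rw [mul_div_assoc']
          exact mul_div_cancel_left₀ _ (hu z).ne'
        rw [Real.log_div (hu z).ne' (hQ z).ne', h3]
        ring
      -- eventually equal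
      have hev : (fun t : ℝ => (u z + t * h z) * Real.log ((u z + t * h z) / Q z))
          =ᶠ[nhds (0:ℝ)] (fun t : ℝ => (u z + t * h z) * Real.log (u z + t * h z)
            - (u z + t * h z) * Real.log (Q z)) := by
        have hcont : Continuous fun t : ℝ => u z + t * h z := by continuity
        have hopen : IsOpen { t : ℝ | 0 < u z + t * h z } :=
          isOpen_lt continuous_const hcont
        have hmem : { t : ℝ | 0 < u z + t * h z } ∈ nhds (0:ℝ) :=
          hopen.mem_nhds (by simpa using hu z)
        filter_upwards [hmem] with t ht
        exact mul_log_div_eq (hQ z) _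
      exact hG.congr_of_eventuallyEq hev
    exact this
  have hloc : IsLocalMin F 0 := by
    have hF0 : F 0 = relEnt u Q := by
      simp only [hF, relEnt, zero_mul, add_zero]
    exact hmin.mono fun t ht => by rw [hF0]; exact ht
  have := hloc.deriv_eq_zero
  rwa [hd.deriv] at this

end AuxLemmas3
section AuxLemmas4
set_option linter.unusedSectionVars false

variable {q u : X × Y → ℝ}

lemma sameCorr_of_min [Nonempty X] [Nonempty Y] (hq : ∀ z, 0 < q z) (hu : IsPos u)
    (hmin : ∀ w : X × Y → ℝ, IsDist w → margX w = margX u → margY w = margY u →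
      relEnt u q ≤ relEnt w q) :
    SameCorr u q := by
  classical
  set L : X × Y → ℝ := fun z => Real.log (u z / q z) with hL
  have quad : ∀ x x' y y', L (x,y) + L (x',y') = L (x,y') + L (x',y) := by
    intro x x' y y'
    rcases eq_or_ne x x' with rfl | hx
    · ring
    rcases eq_or_ne y y' with rfl | hy
    · ring
    set h : X × Y → ℝ := fun z =>
      (if z = (x,y) then (1:ℝ) else 0) + (if z = (x',y') then (1:ℝ) else 0)
      - (if z = (x,y') then (1:ℝ) else 0) - (if z = (x',y) then (1:ℝ) else 0) with hh
    have hsum_mul : ∀ g : X × Y → ℝ,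
        ∑ z : X × Y, h z * g z = g (x,y) + g (x',y') - g (x,y') - g (x',y) := by
      intro g
      have hz : ∀ z : X × Y, h z * g z
          = (if z = (x,y) then g z else 0) + (if z = (x',y') then g z else 0)
            - (if z = (x,y') then g z else 0) - (if z = (x',y) then g z else 0) := by
        intro z
        simp only [hh]
        split_ifs <;> ring
      calc ∑ z : X × Y, h z * g z
          = ∑ z : X × Y, ((if z = (x,y) then g z else 0) + (if z = (x',y') then g z else 0)
            - (if z = (x,y') then g z else 0) - (if z = (x',y) then g z else 0)) :=
            Finset.sum_congr rfl fun z _ => hz z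
      _ = g (x,y) + g (x',y') - g (x,y') - g (x',y) := by
            rw [Finset.sum_sub_distrib, Finset.sum_sub_distrib, Finset.sum_add_distrib]
            simp [Finset.sum_ite_eq']
    have hbound : ∀ z, |h z| ≤ 2 := by
      intro z
      simp only [hh]
      split_ifs <;> norm_num
    have hhX : ∀ a : X, ∑ y₁ : Y, h (a, y₁) = 0 := by
      intro a
      by_cases hax : a = x <;> by_cases hax' : a = x' <;>
        simp [hh, Prod.mk.injEq, hax, hax', hx, hy, Ne.symm hx, Ne.symm hy, Finset.sum_add_distrib,
          Finset.sum_sub_distrib, Finset.sum_ite_eq']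
    have hhY : ∀ b : Y, ∑ x₁ : X, h (x₁, b) = 0 := by
      intro b
      by_cases hby : b = y <;> by_cases hby' : b = y' <;>
        simp [hh, Prod.mk.injEq, hby, hby', hx, hy, Ne.symm hx, Ne.symm hy, Finset.sum_add_distrib,
          Finset.sum_sub_distrib, Finset.sum_ite_eq']
    have hhsum : ∑ z : X × Y, h z = 0 := by
      rw [Fintype.sum_prod_type]
      simp [hhX]
    -- minimum of u, positive
    obtain ⟨zm, -, hzm⟩ := Finset.exists_min_image Finset.univ u ⟨(x,y), Finset.mem_univ _⟩
    set ε : ℝ := u zm with hε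
    have hεpos : 0 < ε := hu.1 zm
    have hfeas : ∀ t : ℝ, |t| < ε / 2 → IsDist (fun z => u z + t * h z)
        ∧ margX (fun z => u z + t * h z) = margX u
        ∧ margY (fun z => u z + t * h z) = margY u := by
      intro t ht
      refine ⟨⟨?_, ?_⟩, ?_, ?_⟩
      · intro z
        have h1 : |t * h z| ≤ |t| * 2 := by
          rw [abs_mul]
          exact mul_le_mul_of_nonneg_left (hbound z) (abs_nonneg t)
        have h2 : ε ≤ u z := hzm z (Finset.mem_univ z)
        have h3 : -(|t| * 2) ≤ t * h z := neg_le_of_abs_le h1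
        have h4 : |t| * 2 < ε := by
          have := ht
          linarith [abs_nonneg t]
        show (0:ℝ) ≤ u z + t * h z
        linarith
      · rw [Finset.sum_add_distrib, hu.2, ← Finset.mul_sum, hhsum, mul_zero, add_zero]
      · funext a
        unfold margX
        rw [Finset.sum_add_distrib, ← Finset.mul_sum, hhX, mul_zero, add_zero]
      · funext b
        unfold margY
        rw [Finset.sum_add_distrib, ← Finset.mul_sum, hhY, mul_zero, add_zero]
    have hev : ∀ᶠ t in nhds (0:ℝ), relEnt u q ≤ relEnt (fun z => u z + t * h z) q := by
      have hmem : Metric.ball (0:ℝ) (ε/2) ∈ nhds (0:ℝ) :=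
        Metric.ball_mem_nhds 0 (by positivity)
      filter_upwards [hmem] with t ht
      rw [Metric.mem_ball, Real.dist_eq, sub_zero] at ht
      obtain ⟨h1, h2, h3⟩ := hfeas t ht
      exact hmin _ h1 h2 h3
    have hder := sum_deriv_eq_zero_of_localmin (fun z => hq z) hu.1 hev
    have hexp := hsum_mul (fun z => L z + 1)
    have hkey : (L (x,y) + 1) + (L (x',y') + 1) - (L (x,y') + 1) - (L (x',y) + 1) = 0 := by
      rw [← hexp]
      exact hder
    linarith
  obtain ⟨x0⟩ := (inferInstance : Nonempty X)
  obtain ⟨y0⟩ := (inferInstance : Nonempty Y)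
  exact ⟨fun x => L (x, y0), fun y => L (x0, y) - L (x0, y0), fun x y => by
    have := quad x x0 y y0
    simp only [hL] at this ⊢
    linarith⟩

end AuxLemmas4
/-- The constraint-set of values for the first optimization problem. -/
def qSet (P Q : X × Y → ℝ) (r : ℝ) : Set ℝ :=
  { d : ℝ | ∃ Qbar : X × Y → ℝ, IsDist Qbar ∧ projE Qbar P ≤ r ∧ d = relEnt Qbar Q }

/-- The constraint-set of values for the second optimization problem. -/
def pSet (P Q : X × Y → ℝ) (r : ℝ) : Set ℝ :=
  { d : ℝ | ∃ Pbar : X × Y → ℝ, IsDist Pbar ∧ relEnt Pbar P ≤ r ∧ d = projE Pbar Q }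

section AuxLemmas5
set_option linter.unusedSectionVars false

variable {P Q : X × Y → ℝ} {r : ℝ}

lemma qSet_bddBelow (hQ : IsPos Q) : BddBelow (qSet P Q r) :=
  ⟨0, by rintro d ⟨Qb, h1, -, rfl⟩; exact relEnt_nonneg h1 hQ⟩

lemma pSet_bddBelow (hQ : IsPos Q) : BddBelow (pSet P Q r) :=
  ⟨0, by rintro d ⟨Pb, h1, -, rfl⟩; exact projE_nonneg hQ h1⟩

lemma exists_min1 (hP : IsPos P) (hQ : IsPos Q) (hr0 : 0 < r) :
    ∃ Q0 : X × Y → ℝ, IsDist Q0 ∧ projE Q0 P ≤ r ∧ IsLeast (qSet P Q r) (relEnt Q0 Q) := by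
  classical
  set S : Set ((X × Y → ℝ) × (X × Y → ℝ)) :=
    { p | (IsDist p.1 ∧ IsDist p.2) ∧ ((margX p.2 = margX p.1 ∧ margY p.2 = margY p.1)
      ∧ relEnt p.2 P ≤ r) } with hSdef
  have h1cl : IsClosed { p : (X × Y → ℝ) × (X × Y → ℝ) | IsDist p.1 ∧ IsDist p.2 } :=
    (isClosed_isDist.preimage continuous_fst).inter (isClosed_isDist.preimage continuous_snd)
  have h3cl : IsClosed { p : (X × Y → ℝ) × (X × Y → ℝ) | relEnt p.2 P ≤ r } :=
    isClosed_le ((continuous_relEnt_left fun z => hP.1 z).comp continuous_snd) continuous_const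
  have hcl : IsClosed S := h1cl.inter (isClosed_margPair.inter h3cl)
  have hne : S.Nonempty :=
    ⟨(P, P), ⟨hP.isDist, hP.isDist⟩, ⟨rfl, rfl⟩, by rw [relEnt_self hP]; exact hr0.le⟩
  obtain ⟨p0, hp0S, hmin⟩ := exists_min_on_pairs hcl (fun p hp => hp.1) hne
    ((continuous_relEnt_left fun z => hQ.1 z).comp continuous_fst)
  obtain ⟨⟨hd1, hd2⟩, ⟨hmX, hmY⟩, hle⟩ := hp0S
  have hfeas : projE p0.1 P ≤ r :=
    (projE_le_relEnt_of hP hd2 hmX hmY).trans hle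
  refine ⟨p0.1, hd1, hfeas, ⟨⟨p0.1, hd1, hfeas, rfl⟩, ?_⟩⟩
  rintro d ⟨Qb, h1, h2, rfl⟩
  obtain ⟨R, hR, hRX, hRY, hRval⟩ := exists_projE_min h1 hP
  have hmem : (Qb, R) ∈ S := ⟨⟨h1, hR⟩, ⟨hRX, hRY⟩, by rw [hRval]; exact h2⟩
  exact hmin _ hmem

lemma exists_min2 (hP : IsPos P) (hQ : IsPos Q) (hr0 : 0 < r) :
    ∃ P0 : X × Y → ℝ, IsDist P0 ∧ relEnt P0 P ≤ r ∧ IsLeast (pSet P Q r) (projE P0 Q) := by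
  classical
  set S : Set ((X × Y → ℝ) × (X × Y → ℝ)) :=
    { p | (IsDist p.1 ∧ IsDist p.2) ∧ ((margX p.2 = margX p.1 ∧ margY p.2 = margY p.1)
      ∧ relEnt p.1 P ≤ r) } with hSdef
  have h1cl : IsClosed { p : (X × Y → ℝ) × (X × Y → ℝ) | IsDist p.1 ∧ IsDist p.2 } :=
    (isClosed_isDist.preimage continuous_fst).inter (isClosed_isDist.preimage continuous_snd)
  have h3cl : IsClosed { p : (X × Y → ℝ) × (X × Y → ℝ) | relEnt p.1 P ≤ r } :=
    isClosed_le ((continuous_relEnt_left fun z => hP.1 z).comp continuous_fst) continuous_const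
  have hcl : IsClosed S := h1cl.inter (isClosed_margPair.inter h3cl)
  have hne : S.Nonempty :=
    ⟨(P, P), ⟨hP.isDist, hP.isDist⟩, ⟨rfl, rfl⟩, by rw [relEnt_self hP]; exact hr0.le⟩
  obtain ⟨p0, hp0S, hmin⟩ := exists_min_on_pairs hcl (fun p hp => hp.1) hne
    ((continuous_relEnt_left fun z => hQ.1 z).comp continuous_snd)
  obtain ⟨⟨hd1, hd2⟩, ⟨hmX, hmY⟩, hle⟩ := hp0S
  have heq : projE p0.1 Q = relEnt p0.2 Q := by
    refine le_antisymm (projE_le_relEnt_of hQ hd2 hmX hmY) ?_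
    obtain ⟨R'', hR'', hRX'', hRY'', hval''⟩ := exists_projE_min hd1 hQ
    have hmem : (p0.1, R'') ∈ S := ⟨⟨hd1, hR''⟩, ⟨hRX'', hRY''⟩, hle⟩
    have h5 := hmin _ hmem
    simp only [Function.comp_apply] at h5
    rwa [hval''] at h5
  refine ⟨p0.1, hd1, hle, ⟨⟨p0.1, hd1, hle, rfl⟩, ?_⟩⟩
  rintro d ⟨Pb, h1, h2, rfl⟩
  obtain ⟨R', hR', hRX', hRY', hval'⟩ := exists_projE_min h1 hQ
  have hmem : (Pb, R') ∈ S := ⟨⟨h1, hR'⟩, ⟨hRX', hRY'⟩, h2⟩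
  have h5 := hmin _ hmem
  simp only [Function.comp_apply] at h5
  rw [heq, ← hval']
  exact h5

end AuxLemmas5
/-- Minimizer predicate for the first problem. -/
def Pred1 (P Q : X × Y → ℝ) (r : ℝ) (Qs : X × Y → ℝ) : Prop :=
  IsDist Qs ∧ projE Qs P ≤ r ∧ relEnt Qs Q = sInf (qSet P Q r)

/-- Minimizer predicate for the second problem. -/
def Pred2 (P Q : X × Y → ℝ) (r : ℝ) (Ps : X × Y → ℝ) : Prop :=
  IsDist Ps ∧ relEnt Ps P ≤ r ∧ projE Ps Q = sInf (pSet P Q r)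

section AuxLemmas6
set_option linter.unusedSectionVars false

variable {P Q : X × Y → ℝ} {r : ℝ}

lemma v2_pos (hP : IsPos P) (hQ : IsPos Q) (hr0 : 0 < r) (hr1 : r < projE Q P) :
    0 < sInf (pSet P Q r) := by
  obtain ⟨P0, hd, hfe, hleast⟩ := exists_min2 hP hQ hr0
  rw [hleast.csInf_eq]
  rcases (projE_nonneg hQ hd).lt_or_eq with h | h
  · exact h
  exfalso
  obtain ⟨R, hR, hRX, hRY, hval⟩ := exists_projE_min hd hQ
  have hR0 : relEnt R Q = 0 := by rw [hval, ← h]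
  have hRQ : R = Q := eq_of_relEnt_eq_zero hR hQ hR0
  have hPX : margX Q = margX P0 := by rw [← hRQ]; exact hRX
  have hPY : margY Q = margY P0 := by rw [← hRQ]; exact hRY
  have heq : projE Q P = projE P0 P := projE_eq_of_marg P hPX hPY
  have hle2 : projE P0 P ≤ relEnt P0 P := projE_le_relEnt hP hd
  linarith

lemma active2 (hP : IsPos P) (hQ : IsPos Q) (hr0 : 0 < r) (hr1 : r < projE Q P)
    {Ps : X × Y → ℝ} (h : Pred2 P Q r Ps) : relEnt Ps P = r := by
  obtain ⟨hd, hfe, hval⟩ := h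
  by_contra hne
  have hlt : relEnt Ps P < r := lt_of_le_of_ne hfe hne
  have hv2 := v2_pos hP hQ hr0 hr1
  obtain ⟨s, hs0, hs1, hsbound⟩ : ∃ s : ℝ, 0 < s ∧ s ≤ 1 ∧
      (1 - s) * relEnt Ps P + s * relEnt Q P ≤ r := by
    rcases le_or_gt (relEnt Q P) r with hc | hc
    · exact ⟨1, one_pos, le_refl 1, by simpa using hc⟩
    · have hden : 0 < relEnt Q P - relEnt Ps P := by linarith
      refine ⟨(r - relEnt Ps P)/(relEnt Q P - relEnt Ps P),
        div_pos (by linarith) hden, ?_, ?_⟩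
      · rw [div_le_one hden]; linarith
      · have hc2 : (r - relEnt Ps P)/(relEnt Q P - relEnt Ps P) * (relEnt Q P - relEnt Ps P)
            = r - relEnt Ps P := div_mul_cancel₀ _ hden.ne'
        nlinarith [hc2]
  have hMd : IsDist (fun z => (1 - s) * Ps z + s * Q z) := isDist_mix hd hQ.isDist hs0.le hs1
  have hMr : relEnt (fun z => (1 - s) * Ps z + s * Q z) P ≤ r :=
    le_trans (relEnt_mix_le hd.1 (fun z => (hQ.1 z).le) (fun z => hP.1 z) hs0.le hs1) hsbound
  have hMe : projE (fun z => (1 - s) * Ps z + s * Q z) Q ≤ (1 - s) * projE Ps Q := by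
    have h2 := projE_mix_le hd hQ.isDist hQ hs0.le hs1
    rw [projE_self hQ] at h2
    linarith
  have hge : sInf (pSet P Q r) ≤ projE (fun z => (1 - s) * Ps z + s * Q z) Q :=
    csInf_le (pSet_bddBelow hQ) ⟨_, hMd, hMr, rfl⟩
  rw [hval] at hMe
  nlinarith

lemma pos1 (hP : IsPos P) (hQ : IsPos Q) (hr0 : 0 < r)
    {Qs : X × Y → ℝ} (h : Pred1 P Q r Qs) : IsPos Qs := by
  obtain ⟨hd, hfe, hval⟩ := h
  refine ⟨fun z => ?_, hd.2⟩
  rcases (hd.1 z).lt_or_eq with hpos | h0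
  · exact hpos
  exfalso
  set Γ : X × Y → ℝ := fun w => (1 - (1/2:ℝ)) * Qs w + (1/2:ℝ) * P w with hΓ
  have hΓpos : ∀ w, 0 < Γ w := by
    intro w
    have h1 := hd.1 w
    have h2 := hP.1 w
    simp only [hΓ]
    nlinarith
  obtain ⟨s, hs0, hs12, hlt⟩ := relEnt_mix_lt_of_zero (fun w => hQ.1 w) hd.1 hΓpos h0.symm
  have hfun : (fun w => (1 - s) * Qs w + s * Γ w)
      = fun w => (1 - s/2) * Qs w + s/2 * P w := by
    funext w; simp only [hΓ]; ring
  rw [hfun] at hlt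
  have hd2 : IsDist (fun w => (1 - s/2) * Qs w + s/2 * P w) :=
    isDist_mix hd hP.isDist (by linarith) (by linarith)
  have hfe2 : projE (fun w => (1 - s/2) * Qs w + s/2 * P w) P ≤ r := by
    have h3 := projE_mix_le hd hP.isDist hP (show (0:ℝ) ≤ s/2 by linarith)
      (show s/2 ≤ 1 by linarith)
    rw [projE_self hP] at h3
    have h4 : (1 - s/2) * projE Qs P ≤ (1 - s/2) * r :=
      mul_le_mul_of_nonneg_left hfe (by linarith)
    nlinarith
  have hge : sInf (qSet P Q r) ≤ relEnt (fun w => (1 - s/2) * Qs w + s/2 * P w) Q :=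
    csInf_le (qSet_bddBelow hQ) ⟨_, hd2, hfe2, rfl⟩
  rw [← hval] at hge
  linarith

lemma pos2 (hP : IsPos P) (hQ : IsPos Q) (hr0 : 0 < r) (hr1 : r < projE Q P)
    {Ps : X × Y → ℝ} (h : Pred2 P Q r Ps) : IsPos Ps := by
  obtain ⟨hd, hfe, hval⟩ := h
  refine ⟨fun z => ?_, hd.2⟩
  rcases (hd.1 z).lt_or_eq with hpos | h0
  · exact hpos
  exfalso
  obtain ⟨s, hs0, hs12, hlt⟩ :=
    relEnt_mix_lt_of_zero (fun w => hP.1 w) hd.1 (fun w => hQ.1 w) h0.symm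
  have hd2 : IsDist (fun w => (1 - s) * Ps w + s * Q w) :=
    isDist_mix hd hQ.isDist hs0.le (by linarith)
  have hfe2 : relEnt (fun w => (1 - s) * Ps w + s * Q w) P ≤ r := le_of_lt (lt_of_lt_of_le hlt hfe)
  have hproj : projE (fun w => (1 - s) * Ps w + s * Q w) Q ≤ (1 - s) * projE Ps Q := by
    have h3 := projE_mix_le hd hQ.isDist hQ hs0.le (by linarith)
    rw [projE_self hQ] at h3
    linarith
  have hge : sInf (pSet P Q r) ≤ projE (fun w => (1 - s) * Ps w + s * Q w) Q :=
    csInf_le (pSet_bddBelow hQ) ⟨_, hd2, hfe2, rfl⟩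
  have hv2 := v2_pos hP hQ hr0 hr1
  rw [hval] at hproj
  nlinarith

lemma same1 [Nonempty X] [Nonempty Y] (hP : IsPos P) (hQ : IsPos Q) (hr0 : 0 < r)
    {Qs : X × Y → ℝ} (h : Pred1 P Q r Qs) : SameCorr Qs Q := by
  have hpos := pos1 hP hQ hr0 h
  obtain ⟨hd, hfe, hval⟩ := h
  refine sameCorr_of_min (fun z => hQ.1 z) hpos ?_
  intro w hw hwX hwY
  have hfw : projE w P ≤ r := by rw [projE_eq_of_marg P hwX hwY]; exact hfe
  rw [hval]
  exact csInf_le (qSet_bddBelow hQ) ⟨w, hw, hfw, rfl⟩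

lemma same2 [Nonempty X] [Nonempty Y] (hP : IsPos P) (hQ : IsPos Q) (hr0 : 0 < r)
    (hr1 : r < projE Q P) {Ps : X × Y → ℝ} (h : Pred2 P Q r Ps) : SameCorr Ps P := by
  have hpos := pos2 hP hQ hr0 hr1 h
  obtain ⟨hd, hfe, hval⟩ := h
  refine sameCorr_of_min (fun z => hP.1 z) hpos ?_
  intro w hw hwX hwY
  by_contra hcon
  push_neg at hcon
  have hwr : relEnt w P ≤ r := le_of_lt (lt_of_lt_of_le hcon hfe)
  have hwval : projE w Q = sInf (pSet P Q r) := by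
    rw [projE_eq_of_marg Q hwX hwY]; exact hval
  have hact := active2 hP hQ hr0 hr1 ⟨hw, hwr, hwval⟩
  have hactPs := active2 hP hQ hr0 hr1 ⟨hd, hfe, hval⟩
  rw [hact, hactPs] at hcon
  exact lt_irrefl r hcon

lemma margEq (hP : IsPos P) (hQ : IsPos Q) (hr0 : 0 < r) (hr1 : r < projE Q P)
    {Qs Ps : X × Y → ℝ} (h1 : Pred1 P Q r Qs) (h2 : Pred2 P Q r Ps) :
    margX Qs = margX Ps ∧ margY Qs = margY Ps := by
  obtain ⟨hd1, hfe1, hval1⟩ := h1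
  obtain ⟨hd2, hfe2, hval2⟩ := h2
  obtain ⟨S, hS, hSX, hSY, hSval⟩ := exists_projE_min hd2 hQ
  obtain ⟨T, hT, hTX, hTY, hTval⟩ := exists_projE_min hd1 hP
  have hSfeas : projE S P ≤ r := by
    rw [projE_eq_of_marg P hSX hSY]
    exact (projE_le_relEnt hP hd2).trans hfe2
  have hv1le : sInf (qSet P Q r) ≤ relEnt S Q :=
    csInf_le (qSet_bddBelow hQ) ⟨S, hS, hSfeas, rfl⟩
  have hTfeas : relEnt T P ≤ r := by rw [hTval]; exact hfe1
  have hTproj : projE T Q ≤ relEnt Qs Q := by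
    rw [projE_eq_of_marg Q hTX hTY]
    exact projE_le_relEnt hQ hd1
  have hv2le : sInf (pSet P Q r) ≤ projE T Q :=
    csInf_le (pSet_bddBelow hQ) ⟨T, hT, hTfeas, rfl⟩
  -- relEnt S Q = projE Ps Q = v2 and v1 = v2
  have hveq : relEnt S Q = relEnt Qs Q := by
    rw [hSval, hval2] at *
    linarith [hv1le, hv2le, hTproj, hval1]
  by_cases hqs : Qs = S
  · constructor
    · rw [hqs]; exact hSX
    · rw [hqs]; exact hSY
  exfalso
  have hWd : IsDist (fun z => (1 - (1/2:ℝ)) * Qs z + (1/2:ℝ) * S z) :=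
    isDist_mix hd1 hS (by norm_num) (by norm_num)
  have hWfeas : projE (fun z => (1 - (1/2:ℝ)) * Qs z + (1/2:ℝ) * S z) P ≤ r := by
    have h3 := projE_mix_le hd1 hS hP (show (0:ℝ) ≤ 1/2 by norm_num)
      (show (1/2:ℝ) ≤ 1 by norm_num)
    linarith [hfe1, hSfeas]
  have hWlt := relEnt_mid_lt hd1.1 hS.1 (fun z => hQ.1 z) hqs
  have hge : sInf (qSet P Q r) ≤ relEnt (fun z => (1 - (1/2:ℝ)) * Qs z + (1/2:ℝ) * S z) Q :=
    csInf_le (qSet_bddBelow hQ) ⟨_, hWd, hWfeas, rfl⟩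
  rw [← hval1] at hge
  rw [hveq] at hWlt
  linarith

lemma uniq1 (hP : IsPos P) (hQ : IsPos Q) (hr0 : 0 < r)
    {A B : X × Y → ℝ} (hA : Pred1 P Q r A) (hB : Pred1 P Q r B) : A = B := by
  by_contra hne
  obtain ⟨hAd, hAf, hAv⟩ := hA
  obtain ⟨hBd, hBf, hBv⟩ := hB
  have hWd : IsDist (fun z => (1 - (1/2:ℝ)) * A z + (1/2:ℝ) * B z) :=
    isDist_mix hAd hBd (by norm_num) (by norm_num)
  have hWfeas : projE (fun z => (1 - (1/2:ℝ)) * A z + (1/2:ℝ) * B z) P ≤ r := by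
    have h3 := projE_mix_le hAd hBd hP (show (0:ℝ) ≤ 1/2 by norm_num)
      (show (1/2:ℝ) ≤ 1 by norm_num)
    linarith
  have hWlt := relEnt_mid_lt hAd.1 hBd.1 (fun z => hQ.1 z) hne
  have hge : sInf (qSet P Q r) ≤ relEnt (fun z => (1 - (1/2:ℝ)) * A z + (1/2:ℝ) * B z) Q :=
    csInf_le (qSet_bddBelow hQ) ⟨_, hWd, hWfeas, rfl⟩
  rw [← hAv] at hge
  linarith [hAv, hBv, hWlt, hge]

lemma uniq2 (hP : IsPos P) (hQ : IsPos Q) (hr0 : 0 < r) (hr1 : r < projE Q P)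
    {A B : X × Y → ℝ} (hA : Pred2 P Q r A) (hB : Pred2 P Q r B) : A = B := by
  by_contra hne
  have hAd := hA.1; have hAf := hA.2.1; have hAv := hA.2.2
  have hBd := hB.1; have hBf := hB.2.1; have hBv := hB.2.2
  by_cases hm : margX A = margX B ∧ margY A = margY B
  · -- same marginals: midpoint strictly decreases D(·‖P), contradicting activeness
    have hactA := active2 hP hQ hr0 hr1 hA
    have hactB := active2 hP hQ hr0 hr1 hB
    have hMd : IsDist (fun z => (1 - (1/2:ℝ)) * A z + (1/2:ℝ) * B z) :=
      isDist_mix hAd hBd (by norm_num) (by norm_num)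
    have hMlt := relEnt_mid_lt hAd.1 hBd.1 (fun z => hP.1 z) hne
    rw [hactA, hactB] at hMlt
    have hMr : relEnt (fun z => (1 - (1/2:ℝ)) * A z + (1/2:ℝ) * B z) P < r := by linarith
    have hMX : margX (fun z => (1 - (1/2:ℝ)) * A z + (1/2:ℝ) * B z) = margX A := by
      rw [margX_mix]; funext x; rw [← hm.1]; ring
    have hMY : margY (fun z => (1 - (1/2:ℝ)) * A z + (1/2:ℝ) * B z) = margY A := by
      rw [margY_mix]; funext y; rw [← hm.2]; ring
    have hMv : projE (fun z => (1 - (1/2:ℝ)) * A z + (1/2:ℝ) * B z) Q = sInf (pSet P Q r) := by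
      rw [projE_eq_of_marg Q hMX hMY]; exact hAv
    have hact := active2 hP hQ hr0 hr1 ⟨hMd, hMr.le, hMv⟩
    linarith
  · -- different marginals: strict convexity of the projected value
    obtain ⟨SA, hSA, hSAX, hSAY, hSAval⟩ := exists_projE_min hAd hQ
    obtain ⟨SB, hSB, hSBX, hSBY, hSBval⟩ := exists_projE_min hBd hQ
    have hSne : SA ≠ SB := by
      intro e
      apply hm
      constructor
      · rw [← hSAX, ← hSBX, e]
      · rw [← hSAY, ← hSBY, e]
    have hWlt := relEnt_mid_lt hSA.1 hSB.1 (fun z => hQ.1 z) hSne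
    have hWd : IsDist (fun z => (1 - (1/2:ℝ)) * SA z + (1/2:ℝ) * SB z) :=
      isDist_mix hSA hSB (by norm_num) (by norm_num)
    have hMd : IsDist (fun z => (1 - (1/2:ℝ)) * A z + (1/2:ℝ) * B z) :=
      isDist_mix hAd hBd (by norm_num) (by norm_num)
    have hMr : relEnt (fun z => (1 - (1/2:ℝ)) * A z + (1/2:ℝ) * B z) P ≤ r := by
      have h3 := relEnt_mix_le hAd.1 hBd.1 (fun z => hP.1 z)
        (show (0:ℝ) ≤ 1/2 by norm_num) (show (1/2:ℝ) ≤ 1 by norm_num)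
      linarith
    have hWX : margX (fun z => (1 - (1/2:ℝ)) * SA z + (1/2:ℝ) * SB z)
        = margX (fun z => (1 - (1/2:ℝ)) * A z + (1/2:ℝ) * B z) := by
      rw [margX_mix, margX_mix, hSAX, hSBX]
    have hWY : margY (fun z => (1 - (1/2:ℝ)) * SA z + (1/2:ℝ) * SB z)
        = margY (fun z => (1 - (1/2:ℝ)) * A z + (1/2:ℝ) * B z) := by
      rw [margY_mix, margY_mix, hSAY, hSBY]
    have hMproj : projE (fun z => (1 - (1/2:ℝ)) * A z + (1/2:ℝ) * B z) Q
        ≤ relEnt (fun z => (1 - (1/2:ℝ)) * SA z + (1/2:ℝ) * SB z) Q :=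
      projE_le_relEnt_of hQ hWd hWX hWY
    have hge : sInf (pSet P Q r) ≤ projE (fun z => (1 - (1/2:ℝ)) * A z + (1/2:ℝ) * B z) Q :=
      csInf_le (pSet_bddBelow hQ) ⟨_, hMd, hMr, rfl⟩
    rw [hSAval, hSBval, hAv, hBv] at hWlt
    linarith

end AuxLemmas6

/-- uniqueness and properties of the optimizers of the two exponent
expressions. -/
theorem exponent_optimizers_unique_and_properties
    [Nonempty X] [Nonempty Y]
    (P Q : X × Y → ℝ) (hP : IsPos P) (hQ : IsPos Q)
    (r : ℝ) (hr0 : 0 < r) (hr1 : r < projE Q P) :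
    (∃! Qs : X × Y → ℝ, IsDist Qs ∧ projE Qs P ≤ r ∧
        relEnt Qs Q
          = sInf { d : ℝ | ∃ Qbar : X × Y → ℝ,
              IsDist Qbar ∧ projE Qbar P ≤ r ∧ d = relEnt Qbar Q }) ∧
    (∃! Ps : X × Y → ℝ, IsDist Ps ∧ relEnt Ps P ≤ r ∧
        projE Ps Q
          = sInf { d : ℝ | ∃ Pbar : X × Y → ℝ,
              IsDist Pbar ∧ relEnt Pbar P ≤ r ∧ d = projE Pbar Q }) ∧
    (∀ Qs Ps : X × Y → ℝ,
      (IsDist Qs ∧ projE Qs P ≤ r ∧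
        relEnt Qs Q
          = sInf { d : ℝ | ∃ Qbar : X × Y → ℝ,
              IsDist Qbar ∧ projE Qbar P ≤ r ∧ d = relEnt Qbar Q }) →
      (IsDist Ps ∧ relEnt Ps P ≤ r ∧
        projE Ps Q
          = sInf { d : ℝ | ∃ Pbar : X × Y → ℝ,
              IsDist Pbar ∧ relEnt Pbar P ≤ r ∧ d = projE Pbar Q }) →
      IsPos Qs ∧ IsPos Ps ∧ SameCorr Qs Q ∧ SameCorr Ps P ∧
        margX Qs = margX Ps ∧ margY Qs = margY Ps) := by
  obtain ⟨Q0, hQ0d, hQ0f, hQ0least⟩ := exists_min1 hP hQ hr0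
  obtain ⟨P0, hP0d, hP0f, hP0least⟩ := exists_min2 hP hQ hr0
  have hQ0pred : Pred1 P Q r Q0 := ⟨hQ0d, hQ0f, (hQ0least.csInf_eq).symm⟩
  have hP0pred : Pred2 P Q r P0 := ⟨hP0d, hP0f, (hP0least.csInf_eq).symm⟩
  refine ⟨⟨Q0, hQ0pred, fun y hy => uniq1 hP hQ hr0 hy hQ0pred⟩,
          ⟨P0, hP0pred, fun y hy => uniq2 hP hQ hr0 hr1 hy hP0pred⟩,
          fun Qs Ps h1 h2 => ?_⟩
  exact ⟨pos1 hP hQ hr0 h1, pos2 hP hQ hr0 hr1 h2, same1 hP hQ hr0 h1,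
    same2 hP hQ hr0 hr1 h2, (margEq hP hQ hr0 hr1 h1 h2).1, (margEq hP hQ hr0 hr1 h1 h2).2⟩
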